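/- Let Ī₁, Ī₂, Ī₃, J₃, m, g, h̄ be positive real constants and χ ∈ ℝ³. Define h : (ℝ³ × ℝ³) × ℝ × ℝ → ℝ by h(Π,Γ,α,l) = (1/2)[Π₁²/Ī₁ + Π₂²/Ī₂ + (Π₃−l)²/Ī₃ + l²/J₃] + m g h̄ ⟨Γ,χ⟩, and set Ω(Π,l) = (Π₁/Ī₁, Π₂/Ī₂, (Π₃−l)/Ī₃). Then, with respect to the bracket {F,K}₋(Π,Γ,α,l) = −⟨Π, ∇_Π F × ∇_Π K⟩ − ⟨Γ, ∇_Π F × ∇_Γ K − ∇_Π K × ∇_Γ F⟩ + (∂F/∂α ∂K/∂l − ∂K/∂α ∂F/∂l), the coordinate functions satisfy: {Π_i, h}₋ = (Π × Ω(Π,l) + m g h̄ (Γ × χ))_i and {Γ_i, h}₋ = (Γ × Ω(Π,l))_i for i = 1,2,3, {α, h}₋ = −(Π₃−l)/Ī₃ + l/J₃, and {l, h}₋ = 0, everywhere on (ℝ³ × ℝ³) × ℝ × ℝ. -/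
import Mathlib


/-- Euclidean inner product on `ℝ³`. -/
def dot3 (a b : Fin 3 → ℝ) : ℝ := a 0 * b 0 + a 1 * b 1 + a 2 * b 2

/-- Cross product on `ℝ³`. -/
def cross3 (a b : Fin 3 → ℝ) : Fin 3 → ℝ :=
  ![a 1 * b 2 - a 2 * b 1, a 2 * b 0 - a 0 * b 2, a 0 * b 1 - a 1 * b 0]

/-- The phase space `𝔰𝔢*(3) × ℝ × ℝ ≅ (ℝ³ × ℝ³) × ℝ × ℝ`. -/
abbrev SE3Phase : Type := (Fin 3 → ℝ) × (Fin 3 → ℝ) × ℝ × ℝ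

/-- Gradient in the variable `Π`. -/
noncomputable def gradPi (F : SE3Phase → ℝ) (p : SE3Phase) : Fin 3 → ℝ :=
  fun i => fderiv ℝ (fun P => F (P, p.2.1, p.2.2.1, p.2.2.2)) p.1 (Pi.single i 1)

/-- Gradient in the variable `Γ`. -/
noncomputable def gradGamma (F : SE3Phase → ℝ) (p : SE3Phase) : Fin 3 → ℝ :=
  fun i => fderiv ℝ (fun G => F (p.1, G, p.2.2.1, p.2.2.2)) p.2.1 (Pi.single i 1)

/-- Partial derivative in the variable `α`. -/
noncomputable def dAlpha (F : SE3Phase → ℝ) (p : SE3Phase) : ℝ :=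
  deriv (fun a => F (p.1, p.2.1, a, p.2.2.2)) p.2.2.1

/-- Partial derivative in the variable `l`. -/
noncomputable def dL (F : SE3Phase → ℝ) (p : SE3Phase) : ℝ :=
  deriv (fun l => F (p.1, p.2.1, p.2.2.1, l)) p.2.2.2

/-- The Poisson bracket on `𝔰𝔢*(3) × ℝ × ℝ`: the heavy top Lie–Poisson bracket in `(Π,Γ)`
plus the canonical bracket in `(α,l)`. -/
noncomputable def minusBracket (F K : SE3Phase → ℝ) : SE3Phase → ℝ :=
  fun p => -(dot3 p.1 (cross3 (gradPi F p) (gradPi K p)))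
    - dot3 p.2.1 (fun i => cross3 (gradPi F p) (gradGamma K p) i
        - cross3 (gradPi K p) (gradGamma F p) i)
    + (dAlpha F p * dL K p - dAlpha K p * dL F p)

/- ### Auxiliary machinery -/

/-- Coordinate projection as a continuous linear map. -/
noncomputable def srPr (i : Fin 3) : (Fin 3 → ℝ) →L[ℝ] ℝ := ContinuousLinearMap.proj i

lemma sr_fderiv_proj (i : Fin 3) (x : Fin 3 → ℝ) :
    fderiv ℝ (fun P : Fin 3 → ℝ => P i) x = srPr i :=
  (srPr i).hasFDerivAt.fderiv

lemma sr_gradPi_quad (I1 I2 I3 J3 l C : ℝ) (x : Fin 3 → ℝ) (j : Fin 3) :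
    fderiv ℝ (fun P : Fin 3 → ℝ => (1/2) * ((P 0)^2 / I1 + (P 1)^2 / I2
      + (P 2 - l)^2 / I3 + l^2 / J3) + C) x (Pi.single j 1)
    = ![x 0 / I1, x 1 / I2, (x 2 - l) / I3] j := by
  have h0 : HasFDerivAt (fun P : Fin 3 → ℝ => P 0) (srPr 0) x := (srPr 0).hasFDerivAt
  have h1 : HasFDerivAt (fun P : Fin 3 → ℝ => P 1) (srPr 1) x := (srPr 1).hasFDerivAt
  have h2 : HasFDerivAt (fun P : Fin 3 → ℝ => P 2) (srPr 2) x := (srPr 2).hasFDerivAt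
  have h2' := h2.sub_const l
  have hbig := ((((((h0.mul h0).mul_const I1⁻¹).add ((h1.mul h1).mul_const I2⁻¹)).add
      ((h2'.mul h2').mul_const I3⁻¹)).add_const (l*l*J3⁻¹)).const_mul (1/2)).add_const C
  have hD : HasFDerivAt (fun P : Fin 3 → ℝ => (1/2) * ((P 0)^2 / I1 + (P 1)^2 / I2
      + (P 2 - l)^2 / I3 + l^2 / J3) + C)
      ((1/2 : ℝ) • (I1⁻¹ • (x 0 • srPr 0 + x 0 • srPr 0)
        + I2⁻¹ • (x 1 • srPr 1 + x 1 • srPr 1)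
        + I3⁻¹ • ((x 2 - l) • srPr 2 + (x 2 - l) • srPr 2))) x := by
    simp only [pow_two, div_eq_mul_inv]
    exact hbig
  rw [hD.fderiv]
  fin_cases j <;> simp [srPr, Pi.single_apply, Fin.ext_iff] <;> ring

lemma sr_gradGamma_lin (c : ℝ) (χ : Fin 3 → ℝ) (C : ℝ) (x : Fin 3 → ℝ) (j : Fin 3) :
    fderiv ℝ (fun G : Fin 3 → ℝ => C + c * dot3 G χ) x (Pi.single j 1) = c * χ j := by
  have h0 : HasFDerivAt (fun P : Fin 3 → ℝ => P 0) (srPr 0) x := (srPr 0).hasFDerivAt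
  have h1 : HasFDerivAt (fun P : Fin 3 → ℝ => P 1) (srPr 1) x := (srPr 1).hasFDerivAt
  have h2 : HasFDerivAt (fun P : Fin 3 → ℝ => P 2) (srPr 2) x := (srPr 2).hasFDerivAt
  have hbig := ((((h0.mul_const (χ 0)).add (h1.mul_const (χ 1))).add
      (h2.mul_const (χ 2))).const_mul c).const_add C
  have hD : HasFDerivAt (fun G : Fin 3 → ℝ => C + c * dot3 G χ)
      (c • (χ 0 • srPr 0 + χ 1 • srPr 1 + χ 2 • srPr 2)) x := by
    simp only [dot3]
    exact hbig
  rw [hD.fderiv]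
  fin_cases j <;> simp [srPr, Pi.single_apply, Fin.ext_iff] <;> ring

lemma sr_dL_quad (I1 I2 I3 J3 a b c C : ℝ) (t : ℝ) :
    deriv (fun l : ℝ => (1/2) * (a / I1 + b / I2 + (c - l)^2 / I3 + l^2 / J3) + C) t
    = -(c - t) / I3 + t / J3 := by
  have hid : HasDerivAt (fun l : ℝ => l) 1 t := hasDerivAt_id t
  have hsub : HasDerivAt (fun l : ℝ => c - l) (-1) t := by
    simpa using (hid.const_sub c)
  have hbig := (((((hasDerivAt_const t (a * I1⁻¹ + b * I2⁻¹)).add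
      ((hsub.mul hsub).mul_const I3⁻¹)).add
      ((hid.mul hid).mul_const J3⁻¹)).const_mul (1/2)).add_const C)
  have hD : HasDerivAt (fun l : ℝ => (1/2) * (a / I1 + b / I2 + (c - l)^2 / I3 + l^2 / J3) + C)
      (1/2 * (0 + (-1 * (c - t) + (c - t) * -1) * I3⁻¹ + (1 * t + t * 1) * J3⁻¹)) t := by
    simp only [pow_two, div_eq_mul_inv]
    exact hbig
  rw [hD.deriv]
  simp only [div_eq_mul_inv]
  ring

lemma sr_gradPi_const (c : ℝ) (p : SE3Phase) (j : Fin 3) :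
    fderiv ℝ (fun _ : Fin 3 → ℝ => c) p.1 (Pi.single j 1) = 0 := by
  simp

lemma sr_h_gradPi (I1 I2 I3 J3 m g hb : ℝ) (χ : Fin 3 → ℝ) (p : SE3Phase) :
    gradPi (fun q : SE3Phase => (1/2) * ((q.1 0)^2 / I1 + (q.1 1)^2 / I2
      + (q.1 2 - q.2.2.2)^2 / I3 + (q.2.2.2)^2 / J3) + m * g * hb * dot3 q.2.1 χ) p
    = ![p.1 0 / I1, p.1 1 / I2, (p.1 2 - p.2.2.2) / I3] :=
  funext fun j => sr_gradPi_quad I1 I2 I3 J3 p.2.2.2 (m * g * hb * dot3 p.2.1 χ) p.1 j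

lemma sr_h_gradGamma (I1 I2 I3 J3 m g hb : ℝ) (χ : Fin 3 → ℝ) (p : SE3Phase) :
    gradGamma (fun q : SE3Phase => (1/2) * ((q.1 0)^2 / I1 + (q.1 1)^2 / I2
      + (q.1 2 - q.2.2.2)^2 / I3 + (q.2.2.2)^2 / J3) + m * g * hb * dot3 q.2.1 χ) p
    = fun j => m * g * hb * χ j :=
  funext fun j => sr_gradGamma_lin (m * g * hb) χ
    ((1/2) * ((p.1 0)^2 / I1 + (p.1 1)^2 / I2
      + (p.1 2 - p.2.2.2)^2 / I3 + (p.2.2.2)^2 / J3)) p.2.1 j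

lemma sr_h_dAlpha (I1 I2 I3 J3 m g hb : ℝ) (χ : Fin 3 → ℝ) (p : SE3Phase) :
    dAlpha (fun q : SE3Phase => (1/2) * ((q.1 0)^2 / I1 + (q.1 1)^2 / I2
      + (q.1 2 - q.2.2.2)^2 / I3 + (q.2.2.2)^2 / J3) + m * g * hb * dot3 q.2.1 χ) p = 0 := by
  show deriv _ _ = 0
  simp

lemma sr_h_dL (I1 I2 I3 J3 m g hb : ℝ) (χ : Fin 3 → ℝ) (p : SE3Phase) :
    dL (fun q : SE3Phase => (1/2) * ((q.1 0)^2 / I1 + (q.1 1)^2 / I2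
      + (q.1 2 - q.2.2.2)^2 / I3 + (q.2.2.2)^2 / J3) + m * g * hb * dot3 q.2.1 χ) p
    = -(p.1 2 - p.2.2.2) / I3 + p.2.2.2 / J3 :=
  sr_dL_quad I1 I2 I3 J3 ((p.1 0)^2) ((p.1 1)^2) (p.1 2) (m * g * hb * dot3 p.2.1 χ) p.2.2.2

lemma sr_gradPi_Pi (i : Fin 3) (p : SE3Phase) :
    gradPi (fun q : SE3Phase => q.1 i) p = fun j => (Pi.single j (1:ℝ) : Fin 3 → ℝ) i := by
  funext j
  show fderiv ℝ (fun P : Fin 3 → ℝ => P i) p.1 (Pi.single j 1) = _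
  rw [sr_fderiv_proj]
  simp [srPr]

lemma sr_gradGamma_Gamma (i : Fin 3) (p : SE3Phase) :
    gradGamma (fun q : SE3Phase => q.2.1 i) p = fun j => (Pi.single j (1:ℝ) : Fin 3 → ℝ) i := by
  funext j
  show fderiv ℝ (fun G : Fin 3 → ℝ => G i) p.2.1 (Pi.single j 1) = _
  rw [sr_fderiv_proj]
  simp [srPr]

lemma sr_gradGamma_Pi (i : Fin 3) (p : SE3Phase) :
    gradGamma (fun q : SE3Phase => q.1 i) p = fun _ => 0 := by
  funext j; show fderiv ℝ (fun _ : Fin 3 → ℝ => p.1 i) p.2.1 (Pi.single j 1) = 0; simp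

lemma sr_gradPi_Gamma (i : Fin 3) (p : SE3Phase) :
    gradPi (fun q : SE3Phase => q.2.1 i) p = fun _ => 0 := by
  funext j; show fderiv ℝ (fun _ : Fin 3 → ℝ => p.2.1 i) p.1 (Pi.single j 1) = 0; simp

lemma sr_gradPi_alpha (p : SE3Phase) :
    gradPi (fun q : SE3Phase => q.2.2.1) p = fun _ => 0 := by
  funext j; show fderiv ℝ (fun _ : Fin 3 → ℝ => p.2.2.1) p.1 (Pi.single j 1) = 0; simp

lemma sr_gradGamma_alpha (p : SE3Phase) :
    gradGamma (fun q : SE3Phase => q.2.2.1) p = fun _ => 0 := by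
  funext j; show fderiv ℝ (fun _ : Fin 3 → ℝ => p.2.2.1) p.2.1 (Pi.single j 1) = 0; simp

lemma sr_gradPi_l (p : SE3Phase) :
    gradPi (fun q : SE3Phase => q.2.2.2) p = fun _ => 0 := by
  funext j; show fderiv ℝ (fun _ : Fin 3 → ℝ => p.2.2.2) p.1 (Pi.single j 1) = 0; simp

lemma sr_gradGamma_l (p : SE3Phase) :
    gradGamma (fun q : SE3Phase => q.2.2.2) p = fun _ => 0 := by
  funext j; show fderiv ℝ (fun _ : Fin 3 → ℝ => p.2.2.2) p.2.1 (Pi.single j 1) = 0; simp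

/-- The Poisson brackets of the coordinate functions with the reduced Hamiltonian of the
spacecraft-rotor system with non-coincident centers: `{Π_i,h}₋ = (Π × Ω + m g h̄ (Γ × χ))_i`,
`{Γ_i,h}₋ = (Γ × Ω)_i`, `{α,h}₋ = −(Π₃−l)/Ī₃ + l/J₃` and `{l,h}₋ = 0`. -/
theorem spacecraft_rotor_reduced_equations_noncoincident
    (I1 I2 I3 J3 m g hb : ℝ)
    (hI1 : 0 < I1) (hI2 : 0 < I2) (hI3 : 0 < I3) (hJ3 : 0 < J3)
    (hm : 0 < m) (hg : 0 < g) (hhb : 0 < hb) (χ : Fin 3 → ℝ)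
    (h : SE3Phase → ℝ)
    (hh : h = fun p => (1/2) * ((p.1 0)^2 / I1 + (p.1 1)^2 / I2
      + (p.1 2 - p.2.2.2)^2 / I3 + (p.2.2.2)^2 / J3) + m * g * hb * dot3 p.2.1 χ)
    (Ω : (Fin 3 → ℝ) → ℝ → Fin 3 → ℝ)
    (hΩ : Ω = fun P l => ![P 0 / I1, P 1 / I2, (P 2 - l) / I3]) :
    (∀ i : Fin 3, ∀ p : SE3Phase,
      minusBracket (fun q => q.1 i) h p
        = cross3 p.1 (Ω p.1 p.2.2.2) i + m * g * hb * cross3 p.2.1 χ i) ∧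
    (∀ i : Fin 3, ∀ p : SE3Phase,
      minusBracket (fun q => q.2.1 i) h p = cross3 p.2.1 (Ω p.1 p.2.2.2) i) ∧
    (∀ p : SE3Phase,
      minusBracket (fun q => q.2.2.1) h p = -(p.1 2 - p.2.2.2) / I3 + p.2.2.2 / J3) ∧
    (∀ p : SE3Phase,
      minusBracket (fun q => q.2.2.2) h p = 0) := by
  subst hh hΩ
  refine ⟨fun i p => ?_, fun i p => ?_, fun p => ?_, fun p => ?_⟩
  · have hdA : dAlpha (fun q : SE3Phase => q.1 i) p = 0 := by
      show deriv (fun _ : ℝ => p.1 i) _ = 0; simp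
    have hdL : dL (fun q : SE3Phase => q.1 i) p = 0 := by
      show deriv (fun _ : ℝ => p.1 i) _ = 0; simp
    simp only [minusBracket, sr_h_gradPi, sr_h_gradGamma, sr_h_dAlpha, sr_h_dL,
      sr_gradPi_Pi, sr_gradGamma_Pi, hdA, hdL]
    fin_cases i <;> simp [dot3, cross3, Pi.single_apply] <;> ring
  · have hdA : dAlpha (fun q : SE3Phase => q.2.1 i) p = 0 := by
      show deriv (fun _ : ℝ => p.2.1 i) _ = 0; simp
    have hdL : dL (fun q : SE3Phase => q.2.1 i) p = 0 := by
      show deriv (fun _ : ℝ => p.2.1 i) _ = 0; simp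
    simp only [minusBracket, sr_h_gradPi, sr_h_gradGamma, sr_h_dAlpha, sr_h_dL,
      sr_gradGamma_Gamma, sr_gradPi_Gamma, hdA, hdL]
    fin_cases i <;> simp [dot3, cross3, Pi.single_apply] <;> ring
  · have hdA : dAlpha (fun q : SE3Phase => q.2.2.1) p = 1 := by
      show deriv (fun a : ℝ => a) _ = 1; simp
    have hdL : dL (fun q : SE3Phase => q.2.2.1) p = 0 := by
      show deriv (fun _ : ℝ => p.2.2.1) _ = 0; simp
    simp only [minusBracket, sr_h_gradPi, sr_h_gradGamma, sr_h_dAlpha, sr_h_dL,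
      sr_gradPi_alpha, sr_gradGamma_alpha, hdA, hdL]
    simp [dot3, cross3]
  · have hdA : dAlpha (fun q : SE3Phase => q.2.2.2) p = 0 := by
      show deriv (fun _ : ℝ => p.2.2.2) _ = 0; simp
    have hdL : dL (fun q : SE3Phase => q.2.2.2) p = 1 := by
      show deriv (fun l : ℝ => l) _ = 1; simp
    simp only [minusBracket, sr_h_gradPi, sr_h_gradGamma, sr_h_dAlpha, sr_h_dL,
      sr_gradPi_l, sr_gradGamma_l, hdA, hdL]
    simp [dot3, cross3]
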